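/- Let G be a finite multiplicative group, let s ∈ G with s ≠ 1, and let c, d ∈ G with c ≠ d. Then the generalized coboundary matrices M̄_c and M̄_d have the same set of negative entries in row s (i.e., {x ∈ G : M̄_c(s,x) = −1} = {x ∈ G : M̄_d(s,x) = −1}) if and only if s² = 1 and d = s·c. -/

import Mathlib

variable {G : Type*} [Group G] [DecidableEq G]

/-- The characteristic map `δ_d`. -/
def charMap (d x : G) : ℤ := if x = d then -1 else 1

/-- The elementary coboundary `∂_d`. -/
def elemCob (d g h : G) : ℤ := charMap d g * charMap d h * charMap d (g * h)

/-- The generalized coboundary matrix `M̄_d`: the matrix of `∂_d` with row `d` negated. -/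
def genCob (d g h : G) : ℤ := if g = d then -(elemCob d g h) else elemCob d g h

lemma genCob_neg_iff (d s x : G) (hs : s ≠ 1) :
    genCob d s x = -1 ↔ (s = d ∧ (x = 1 ∨ x = d)) ∨ (s ≠ d ∧ (x = d ∨ s * x = d)) := by
  unfold genCob elemCob charMap
  split_ifs with h1 h2 h3 h2 h3 <;> simp_all

/-- for `s ≠ 1` and `c ≠ d`, the matrices `M̄_c` and `M̄_d` share their
negative entries in row `s` iff `s² = 1` and `d = s·c`. -/
theorem genCob_share_negatives_iff (s c d : G) (hs : s ≠ 1) (hcd : c ≠ d) :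
    {x : G | genCob c s x = -1} = {x : G | genCob d s x = -1} ↔ s ^ 2 = 1 ∧ d = s * c := by
  rw [Set.ext_iff]
  simp only [Set.mem_setOf_eq, genCob_neg_iff _ s _ hs, sq]
  constructor
  · intro H
    by_cases hsc : s = c
    · subst hsc
      have h1 : s ≠ d := hcd
      simp only [h1, ne_eq, not_false_iff, true_and, false_and, false_or,
        eq_self_iff_true, not_true, or_false] at H
      have hd1 : d = 1 := by
        rcases (H 1).mp (Or.inl rfl) with h | h
        · exact h.symm
        · rw [mul_one] at h; exact absurd h h1
      have hss : s * s = 1 := by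
        rcases (H s⁻¹).mpr (Or.inr (by rw [mul_inv_cancel, hd1])) with h | h
        · exact absurd (inv_eq_one.mp h) hs
        · exact mul_eq_one_iff_eq_inv.mpr h.symm
      exact ⟨hss, by rw [hd1, hss]⟩
    · by_cases hsd : s = d
      · subst hsd
        have h1 : s ≠ c := hsc
        simp only [h1, ne_eq, not_false_iff, true_and, false_and, false_or,
          eq_self_iff_true, not_true, or_false] at H
        have hc1 : c = 1 := by
          rcases (H 1).mpr (Or.inl rfl) with h | h
          · exact h.symm
          · rw [mul_one] at h; exact absurd h h1
        have hss : s * s = 1 := by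
          rcases (H s⁻¹).mp (Or.inr (by rw [mul_inv_cancel, hc1])) with h | h
          · exact absurd (inv_eq_one.mp h) hs
          · exact mul_eq_one_iff_eq_inv.mpr h.symm
        exact ⟨hss, by rw [hc1, mul_one]⟩
      · simp only [hsc, hsd, ne_eq, not_false_iff, true_and, false_and, false_or] at H
        have hd : d = s * c := by
          rcases (H c).mp (Or.inl rfl) with h | h
          · exact absurd h hcd
          · exact h.symm
        have hss : s * s = 1 := by
          rcases (H d).mpr (Or.inl rfl) with h | h
          · exact absurd h.symm hcd
          · rw [hd, ← mul_assoc] at h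
            have h2 : s * s * c = 1 * c := by rw [h, one_mul]
            exact mul_right_cancel h2
        exact ⟨hss, hd⟩
  · rintro ⟨hss, rfl⟩
    intro x
    have hxc : x = s * c ↔ s * x = c := by
      constructor
      · rintro rfl; rw [← mul_assoc, hss, one_mul]
      · intro h; rw [← h, ← mul_assoc, hss, one_mul]
    have h4 : s * x = s * c ↔ x = c := mul_right_inj s
    have h1 : s = s * c ↔ c = 1 := by
      constructor
      · intro h; nth_rewrite 1 [← mul_one s] at h; exact (mul_left_cancel h).symm
      · rintro rfl; rw [mul_one]
    by_cases hsc : s = c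
    · have h3 : s * x = c ↔ x = 1 := by
        rw [← hsc]; exact mul_eq_left
      have hc1 : c ≠ 1 := fun h => hs (hsc.trans h)
      tauto
    · by_cases hc1 : c = 1
      · have h5 : x = c ↔ x = 1 := by rw [hc1]
        tauto
      · tauto
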